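/- Let x ∈ ℝⁿ with n ≥ 2, and suppose x₁ > xᵢ for all i ≥ 2. Let x₂' := max_{2≤i≤n} xᵢ and let ε > 0. If λ ≥ (ln(n-1) - ln ε)/(x₁ - x₂'), then for every coordinate i, |Softmax_λ(x)ᵢ - (e₁)ᵢ| ≤ ε, where Softmax_λ(x)ᵢ = exp(λxᵢ)/∑ⱼ exp(λxⱼ) and e₁ is the first standard basis vector. -/
import Mathlib


/-- Finite-temperature softmax approximates hardmax: if `x 0` is the unique maximizer,
`x2` is the maximum of the remaining entries, and the inverse temperature `lam` is at
least `(ln(n-1) - ln ε)/(x 0 - x2)`, then every coordinate of the softmax differs from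
the one-hot vector `e₁` by at most `ε`. -/
theorem softmax_approx_hardmax
    (n : ℕ) (hn : 2 ≤ n) (x : Fin n → ℝ) (x2 ε lam : ℝ)
    (hε : 0 < ε)
    (hmax : ∀ i : Fin n, i ≠ ⟨0, by omega⟩ → x i < x ⟨0, by omega⟩)
    (hx2 : IsGreatest {y : ℝ | ∃ i : Fin n, i ≠ ⟨0, by omega⟩ ∧ x i = y} x2)
    (hlam : (Real.log (n - 1) - Real.log ε) / (x ⟨0, by omega⟩ - x2) ≤ lam) :
    ∀ i : Fin n,
      |Real.exp (lam * x i) / (∑ j : Fin n, Real.exp (lam * x j))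
        - (if i = ⟨0, by omega⟩ then (1 : ℝ) else 0)| ≤ ε := by
  intro i
  have hz : (0 : ℕ) < n := by omega
  set z0 : Fin n := ⟨0, by omega⟩ with hz0
  set S := ∑ j : Fin n, Real.exp (lam * x j) with hS
  have hSpos : 0 < S :=
    Finset.sum_pos (fun j _ => Real.exp_pos _) ⟨z0, Finset.mem_univ _⟩
  have hterm_le : ∀ j : Fin n, Real.exp (lam * x j) ≤ S := fun j =>
    Finset.single_le_sum (f := fun k => Real.exp (lam * x k))
      (fun k _ => (Real.exp_pos _).le) (Finset.mem_univ j)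
  by_cases hε1 : 1 ≤ ε
  · have h1 : 0 ≤ Real.exp (lam * x i) / S := by positivity
    have h2 : Real.exp (lam * x i) / S ≤ 1 := (div_le_one hSpos).mpr (hterm_le i)
    rw [abs_le]
    split <;> constructor <;> linarith
  · push_neg at hε1
    have hx02 : x2 < x z0 := by
      obtain ⟨i1, hi1, hxi1⟩ := hx2.1
      calc x2 = x i1 := hxi1.symm
        _ < x z0 := hmax i1 hi1
    have hgap : 0 < x z0 - x2 := by linarith
    have hn1 : (1:ℝ) ≤ (n:ℝ) - 1 := by
      have : (2:ℝ) ≤ (n:ℝ) := by exact_mod_cast hn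
      linarith
    have hlog : Real.log ((n:ℝ) - 1) - Real.log ε ≤ lam * (x z0 - x2) := by
      rw [div_le_iff₀ hgap] at hlam
      linarith
    have hlogn : 0 ≤ Real.log ((n:ℝ) - 1) := Real.log_nonneg hn1
    have hlogε : Real.log ε < 0 := Real.log_neg hε (by linarith)
    have hlampos : 0 < lam := by
      have h1 : 0 < lam * (x z0 - x2) := by linarith
      nlinarith [h1, hgap]
    have hkey : Real.exp (lam * x2) ≤ Real.exp (lam * x z0) * (ε / ((n:ℝ) - 1)) := by
      have h1 : lam * x2 ≤ lam * x z0 + Real.log (ε / ((n:ℝ) - 1)) := by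
        rw [Real.log_div hε.ne' (by linarith)]
        nlinarith
      calc Real.exp (lam * x2) ≤ Real.exp (lam * x z0 + Real.log (ε / ((n:ℝ) - 1))) :=
            Real.exp_le_exp.mpr h1
        _ = Real.exp (lam * x z0) * (ε / ((n:ℝ) - 1)) := by
            rw [Real.exp_add, Real.exp_log (by positivity)]
    have hoff : ∀ j : Fin n, j ≠ z0 →
        Real.exp (lam * x j) ≤ Real.exp (lam * x z0) * (ε / ((n:ℝ) - 1)) := by
      intro j hj
      have hxj : x j ≤ x2 := hx2.2 ⟨j, hj, rfl⟩
      have : lam * x j ≤ lam * x2 := by nlinarith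
      exact le_trans (Real.exp_le_exp.mpr this) hkey
    by_cases hi : i = z0
    · 
      have hsplit : S = Real.exp (lam * x z0) +
          ∑ j ∈ Finset.univ.erase z0, Real.exp (lam * x j) :=
        (Finset.add_sum_erase Finset.univ (fun j => Real.exp (lam * x j))
          (Finset.mem_univ z0)).symm
      have hcard : (Finset.univ.erase z0).card = n - 1 := by
        rw [Finset.card_erase_of_mem (Finset.mem_univ z0), Finset.card_univ, Fintype.card_fin]
      have hsum : ∑ j ∈ Finset.univ.erase z0, Real.exp (lam * x j)
          ≤ Real.exp (lam * x z0) * ε := by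
        calc ∑ j ∈ Finset.univ.erase z0, Real.exp (lam * x j)
            ≤ ∑ _j ∈ Finset.univ.erase z0, Real.exp (lam * x z0) * (ε / ((n:ℝ) - 1)) :=
              Finset.sum_le_sum (fun j hj => hoff j (Finset.ne_of_mem_erase hj))
          _ = ((n:ℝ) - 1) * (Real.exp (lam * x z0) * (ε / ((n:ℝ) - 1))) := by
              rw [Finset.sum_const, hcard, nsmul_eq_mul]
              congr 1
              have : (1:ℕ) ≤ n := by omega
              push_cast [Nat.cast_sub this]
              ring
          _ = Real.exp (lam * x z0) * ε := by
              field_simp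
      have h2 : Real.exp (lam * x z0) / S ≤ 1 := (div_le_one hSpos).mpr (hterm_le z0)
      have h3 : 1 - Real.exp (lam * x z0) / S ≤ ε := by
        have heq : 1 - Real.exp (lam * x z0) / S
            = (S - Real.exp (lam * x z0)) / S := by field_simp
        rw [heq, div_le_iff₀ hSpos]
        nlinarith [hterm_le z0, hε.le, hsum, hsplit]
      subst hi
      rw [if_pos rfl, abs_le]
      constructor <;> linarith
    · simp only [if_neg hi, sub_zero]
      rw [abs_of_nonneg (by positivity)]
      rw [div_le_iff₀ hSpos]
      have h1 := hoff i hi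
      have h2 : Real.exp (lam * x z0) * (ε / ((n:ℝ) - 1)) ≤ Real.exp (lam * x z0) * ε := by
        have : ε / ((n:ℝ) - 1) ≤ ε := by
          rw [div_le_iff₀ (by linarith)]
          nlinarith
        nlinarith [Real.exp_pos (lam * x z0)]
      have h3 : Real.exp (lam * x z0) * ε ≤ ε * S := by
        nlinarith [hterm_le z0]
      linarith
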